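/- Let Δ ⊆ ℝⁿ be a nonempty compact set, let μ, σ : ℝⁿ → ℝ be continuous, define f(φ,θ) = -μ(θ) + (φ/2)·σ(θ)² and α(φ) = min_{θ∈Δ} f(φ,θ). Suppose that at some φ₀ ∈ ℝ the minimum α(φ₀) is attained at a unique point θ̂ ∈ Δ (i.e., f(φ₀,θ) > α(φ₀) for all θ ∈ Δ with θ ≠ θ̂). Then α is differentiable at φ₀ and α'(φ₀) = (1/2)·σ(θ̂)². -/
import Mathlib


/-- envelope / Danskin formula: if the minimum defining
`α(φ) = min_{θ∈Δ} f(φ,θ)` with `f(φ,θ) = -μ(θ) + (φ/2)σ(θ)²` is attained at `φ₀`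
at a unique point `θ̂ ∈ Δ`, then `α` is differentiable at `φ₀` with
`α'(φ₀) = (1/2)σ(θ̂)²`. -/
theorem stmt_14 {n : ℕ} (Δ : Set (Fin n → ℝ)) (hne : Δ.Nonempty) (hcomp : IsCompact Δ)
    (μ σ : (Fin n → ℝ) → ℝ) (hμ : Continuous μ) (hσ : Continuous σ)
    (f : ℝ → (Fin n → ℝ) → ℝ)
    (hf : ∀ φ θ, f φ θ = -μ θ + (φ / 2) * (σ θ) ^ 2)
    (α : ℝ → ℝ) (hα : ∀ φ, α φ = sInf ((f φ) '' Δ))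
    (φ₀ : ℝ) (θhat : Fin n → ℝ) (hθΔ : θhat ∈ Δ)
    (hmin : f φ₀ θhat = α φ₀)
    (huniq : ∀ θ ∈ Δ, θ ≠ θhat → α φ₀ < f φ₀ θ) :
    HasDerivAt α ((1 / 2) * (σ θhat) ^ 2) φ₀ := by
  set c : ℝ := (1 / 2) * (σ θhat) ^ 2 with hc
  set g : (Fin n → ℝ) → ℝ := fun θ => (1 / 2) * (σ θ) ^ 2 with hg
  have hgc : Continuous g := by fun_prop
  have hfc : ∀ φ, Continuous (f φ) := by
    intro φ
    have : f φ = fun θ => -μ θ + (φ / 2) * (σ θ) ^ 2 := funext (hf φ)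
    rw [this]; fun_prop
  have hαle : ∀ φ, ∀ θ ∈ Δ, α φ ≤ f φ θ := by
    intro φ θ hθ
    rw [hα]
    exact csInf_le ((hcomp.image (hfc φ)).bddBelow) (Set.mem_image_of_mem _ hθ)
  have hleα : ∀ φ (b : ℝ), (∀ θ ∈ Δ, b ≤ f φ θ) → b ≤ α φ := by
    intro φ b hb
    rw [hα]
    exact le_csInf (hne.image _) (by rintro _ ⟨θ, hθ, rfl⟩; exact hb θ hθ)
  -- key decomposition
  have hdec : ∀ φ θ, f φ θ - (α φ₀ + (φ - φ₀) * c) =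
      (f φ₀ θ - α φ₀) + (φ - φ₀) * (g θ - c) := by
    intro φ θ; rw [hf, hf]; simp only [hg]; ring
  -- bound M on |g θ - c| over Δ
  obtain ⟨θM, hθM, hM'⟩ := hcomp.exists_isMaxOn hne
    ((continuous_abs.comp (hgc.sub continuous_const)).continuousOn)
  have hM : ∀ θ ∈ Δ, |g θ - c| ≤ |g θM - c| := fun θ hθ => hM' hθ
  set M : ℝ := |g θM - c| with hMdef
  have hM0 : 0 ≤ M := abs_nonneg _
  rw [hasDerivAt_iff_isLittleO, Asymptotics.isLittleO_iff]
  intro ε hε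
  -- find η > 0 such that the lower bound holds
  have key : ∃ η > 0, ∀ φ, |φ - φ₀| < η → ∀ θ ∈ Δ,
      -(ε * |φ - φ₀|) ≤ f φ θ - (α φ₀ + (φ - φ₀) * c) := by
    set K : Set (Fin n → ℝ) := Δ ∩ {θ | ε ≤ |g θ - c|} with hK
    by_cases hKne : K.Nonempty
    · have hKcomp : IsCompact K := hcomp.inter_right
        (isClosed_le continuous_const (continuous_abs.comp (hgc.sub continuous_const)))
      obtain ⟨θ₀, hθ₀K, hθ₀min'⟩ := hKcomp.exists_isMinOn hKne ((hfc φ₀).continuousOn)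
      have hθ₀min : ∀ θ ∈ K, f φ₀ θ₀ ≤ f φ₀ θ := fun θ hθ => hθ₀min' hθ
      have hθ₀Δ : θ₀ ∈ Δ := hθ₀K.1
      have hθ₀ne : θ₀ ≠ θhat := by
        intro h
        have := hθ₀K.2
        rw [h] at this
        simp only [Set.mem_setOf_eq, hg, hc, sub_self, abs_zero] at this
        linarith
      have hδ : 0 < f φ₀ θ₀ - α φ₀ := by linarith [huniq θ₀ hθ₀Δ hθ₀ne]
      set δ := f φ₀ θ₀ - α φ₀ with hδdef
      refine ⟨δ / (M + 1), by positivity, fun φ hφ θ hθ => ?_⟩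
      rw [hdec]
      by_cases hcase : ε ≤ |g θ - c|
      · -- θ ∈ K
        have h1 : δ ≤ f φ₀ θ - α φ₀ := by
          have := hθ₀min θ ⟨hθ, hcase⟩; linarith
        have h2 : -(|φ - φ₀| * M) ≤ (φ - φ₀) * (g θ - c) := by
          have : |(φ - φ₀) * (g θ - c)| ≤ |φ - φ₀| * M := by
            rw [abs_mul]
            exact mul_le_mul_of_nonneg_left (hM θ hθ) (abs_nonneg _)
          linarith [neg_abs_le ((φ - φ₀) * (g θ - c))]
        have h3 : |φ - φ₀| * M ≤ δ := by
          have h4 : |φ - φ₀| * (M + 1) ≤ δ := by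
            calc |φ - φ₀| * (M + 1) ≤ (δ / (M + 1)) * (M + 1) := by
                  apply mul_le_mul_of_nonneg_right hφ.le; linarith
              _ = δ := by field_simp
          nlinarith [abs_nonneg (φ - φ₀)]
        nlinarith [abs_nonneg (φ - φ₀), mul_nonneg hε.le (abs_nonneg (φ - φ₀))]
      · push_neg at hcase
        have h1 : 0 ≤ f φ₀ θ - α φ₀ := by linarith [hαle φ₀ θ hθ]
        have h2 : -(ε * |φ - φ₀|) ≤ (φ - φ₀) * (g θ - c) := by
          have : |(φ - φ₀) * (g θ - c)| ≤ |φ - φ₀| * ε := by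
            rw [abs_mul]
            exact mul_le_mul_of_nonneg_left hcase.le (abs_nonneg _)
          have := neg_abs_le ((φ - φ₀) * (g θ - c))
          nlinarith
        linarith
    · -- K empty: every θ satisfies |g θ - c| < ε
      refine ⟨1, one_pos, fun φ _ θ hθ => ?_⟩
      rw [hdec]
      have hcase : |g θ - c| < ε := by
        by_contra h
        exact hKne ⟨θ, hθ, by push_neg at h; exact h⟩
      have h1 : 0 ≤ f φ₀ θ - α φ₀ := by linarith [hαle φ₀ θ hθ]
      have h2 : -(ε * |φ - φ₀|) ≤ (φ - φ₀) * (g θ - c) := by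
        have : |(φ - φ₀) * (g θ - c)| ≤ |φ - φ₀| * ε := by
          rw [abs_mul]
          exact mul_le_mul_of_nonneg_left hcase.le (abs_nonneg _)
        have := neg_abs_le ((φ - φ₀) * (g θ - c))
        nlinarith
      linarith
  obtain ⟨η, hη, hlow⟩ := key
  have hev : ∀ᶠ φ in nhds φ₀, |φ - φ₀| < η := by
    have h := Metric.ball_mem_nhds φ₀ hη
    filter_upwards [h] with y hy
    simpa [Real.dist_eq] using hy
  filter_upwards [hev] with φ hφ
  have hupper : α φ - (α φ₀ + (φ - φ₀) * c) ≤ 0 := by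
    have h1 : α φ ≤ f φ θhat := hαle φ θhat hθΔ
    have h2 : f φ θhat = α φ₀ + (φ - φ₀) * c := by
      have := hdec φ θhat
      have h0 : f φ₀ θhat - α φ₀ = 0 := by rw [hmin]; ring
      have hgθ : g θhat - c = 0 := by simp [hg, hc]
      rw [h0, hgθ] at this
      linarith
    linarith
  have hlower : -(ε * |φ - φ₀|) ≤ α φ - (α φ₀ + (φ - φ₀) * c) := by
    have := hleα φ (α φ₀ + (φ - φ₀) * c - ε * |φ - φ₀|)
      (fun θ hθ => by linarith [hlow φ hφ θ hθ])
    linarith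
  have : |α φ - α φ₀ - (φ - φ₀) * c| ≤ ε * |φ - φ₀| := by
    rw [abs_le]
    constructor <;> [linarith; linarith]
  simpa [Real.norm_eq_abs, smul_eq_mul] using this
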